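/- arXiv:1102.5280 — 2 statements merged into one kernel-verified Lean document; each statement's English description precedes it below -/
import Mathlib

section
/- For finite groups G, H, subgroups K, K' ≤ G and homomorphisms φ : K → H, φ' : K' → H, the bisets H ×_{K,φ} G and H ×_{K',φ'} G are isomorphic as (G,H)-bisets if and only if there exist g ∈ G and h ∈ H such that K' = gKg⁻¹ and φ'(gkg⁻¹) = hφ(k)h⁻¹ for all k ∈ K. -/
section

variable {G H : Type*} [Group G] [Group H]

/-- The relation on `H × G` generating `(h, kg) ∼ (hφ(k), g)` for `k ∈ K`. -/
def cosetRel (K : Subgroup G) (φ : K →* H) (a b : H × G) : Prop :=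
  ∃ k : K, b.1 = a.1 * φ k ∧ b.2 = (k : G)⁻¹ * a.2

/-- The transitive left-free `(G,H)`-biset `H ×_{K,φ} G`. -/
def CosetBiset (K : Subgroup G) (φ : K →* H) : Type _ := Quot (cosetRel K φ)

variable {K : Subgroup G} {φ : K →* H}

/-- Left `H`-action on `H ×_{K,φ} G`. -/
def cbLeft (h₀ : H) : CosetBiset K φ → CosetBiset K φ :=
  Quot.map (fun a => (h₀ * a.1, a.2))
    (by rintro a b ⟨k, h1, h2⟩; exact ⟨k, by simp only []; rw [h1, mul_assoc], h2⟩)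

/-- Right `G`-action on `H ×_{K,φ} G`. -/
def cbRight (g₀ : G) : CosetBiset K φ → CosetBiset K φ :=
  Quot.map (fun a => (a.1, a.2 * g₀))
    (by rintro a b ⟨k, h1, h2⟩; exact ⟨k, h1, by simp only []; rw [h2, mul_assoc]⟩)

end

lemma cosetRel_equivalence {G H : Type*} [Group G] [Group H] (K : Subgroup G) (φ : K →* H) :
    Equivalence (cosetRel K φ) where
  refl a := ⟨1, by simp, by simp⟩
  symm := by
    rintro a b ⟨k, h1, h2⟩
    refine ⟨k⁻¹, ?_, ?_⟩
    · rw [h1, map_inv]; group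
    · rw [h2]; push_cast; group
  trans := by
    rintro a b c ⟨k, h1, h2⟩ ⟨l, h3, h4⟩
    refine ⟨k * l, ?_, ?_⟩
    · rw [h3, h1, map_mul]; group
    · rw [h4, h2]; push_cast; group

lemma cb_mk_eq {G H : Type*} [Group G] [Group H] {K : Subgroup G} {φ : K →* H} {a b : H × G} :
    (Quot.mk (cosetRel K φ) a = Quot.mk (cosetRel K φ) b) ↔ cosetRel K φ a b :=
  ⟨fun h => (cosetRel_equivalence K φ).eqvGen_iff.mp (Quot.eq.mp h), fun h => Quot.sound h⟩

/-- `H ×_{K,φ} G ≅ H ×_{K',φ'} G` as `(G,H)`-bisets iff there are `g ∈ G`,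
`h ∈ H` with `K' = gKg⁻¹` and `φ'(gkg⁻¹) = hφ(k)h⁻¹` for all `k ∈ K`. -/
theorem stmt_6 {G H : Type*} [Group G] [Group H] [Finite G] [Finite H]
    (K K' : Subgroup G) (φ : K →* H) (φ' : K' →* H) :
    (∃ e : CosetBiset K φ ≃ CosetBiset K' φ',
      (∀ (h₀ : H) (q : CosetBiset K φ), e (cbLeft h₀ q) = cbLeft h₀ (e q)) ∧
      (∀ (g₀ : G) (q : CosetBiset K φ), e (cbRight g₀ q) = cbRight g₀ (e q))) ↔
    (∃ (g : G) (h : H), K' = K.map (MulAut.conj g).toMonoidHom ∧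
      ∀ (k : K) (k' : K'), (k' : G) = g * (k : G) * g⁻¹ →
        (φ' k' : H) = h * (φ k : H) * h⁻¹) := by
  constructor
  · rintro ⟨e, hL, hR⟩
    obtain ⟨⟨h₀, g₀⟩, hp⟩ := Quot.exists_rep (e (Quot.mk _ ((1 : H), (1 : G))))
    have key : ∀ a : H × G,
        e (Quot.mk _ a) = Quot.mk (cosetRel K' φ') (a.1 * h₀, g₀ * a.2) := by
      intro a
      have h1 : cbLeft a.1 (cbRight a.2 (Quot.mk (cosetRel K φ) (1, 1)))
          = Quot.mk (cosetRel K φ) a := by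
        show Quot.mk _ (a.1 * 1, 1 * a.2) = _
        simp
      rw [← h1, hL]
      have hR' := hR a.2 (Quot.mk (cosetRel K φ) (1, 1))
      rw [hR', ← hp]
      rfl
    have fwd : ∀ k : K, ∃ k' : K',
        (k' : G) = g₀ * (k : G) * g₀⁻¹ ∧ (φ' k' : H) = h₀⁻¹ * (φ k : H) * h₀ := by
      intro k
      have base : Quot.mk (cosetRel K φ) ((1 : H), (1 : G))
          = Quot.mk _ (φ k, (k : G)⁻¹) := Quot.sound ⟨k, by simp, by simp⟩
      have h1 := congrArg e base
      rw [key, key] at h1; replace h1 := cb_mk_eq.mp h1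
      obtain ⟨k', e1, e2⟩ := h1
      simp only [one_mul, mul_one] at e1 e2
      -- e1 : φ k * h₀ = h₀ * φ' k'
      -- e2 : g₀ * (k:G)⁻¹ = (k':G)⁻¹ * g₀
      refine ⟨k', ?_, ?_⟩
      · have h2 : (k' : G) * (g₀ * (k : G)⁻¹) * (k : G)
            = (k' : G) * ((k' : G)⁻¹ * g₀) * (k : G) := by rw [e2]
        have h3 : (k' : G) * g₀ = g₀ * (k : G) := by
          calc (k' : G) * g₀ = (k' : G) * (g₀ * (k : G)⁻¹) * (k : G) := by group
            _ = (k' : G) * ((k' : G)⁻¹ * g₀) * (k : G) := h2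
            _ = g₀ * (k : G) := by group
        rw [eq_mul_inv_iff_mul_eq]
        exact h3
      · rw [mul_assoc, eq_inv_mul_iff_mul_eq]
        exact e1.symm
    have bwd : ∀ k' : K', g₀⁻¹ * (k' : G) * g₀ ∈ K := by
      intro k'
      have h1 : e (Quot.mk _ ((1 : H), (1 : G)))
          = e (Quot.mk _ (h₀ * φ' k' * h₀⁻¹, g₀⁻¹ * (k' : G)⁻¹ * g₀)) := by
        rw [key, key]
        apply Quot.sound
        refine ⟨k', ?_, ?_⟩
        · show h₀ * (φ' k' : H) * h₀⁻¹ * h₀ = 1 * h₀ * (φ' k' : H); group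
        · show g₀ * (g₀⁻¹ * (k' : G)⁻¹ * g₀) = (k' : G)⁻¹ * (g₀ * 1); group
      have h2 := e.injective h1
      replace h2 := cb_mk_eq.mp h2
      obtain ⟨k, _, e2⟩ := h2
      -- e2 : g₀⁻¹ * (k':G)⁻¹ * g₀ = (k:G)⁻¹ * 1
      have h3 : g₀⁻¹ * (k' : G) * g₀ = (k : G) := by
        have := congrArg (fun x => x⁻¹) e2
        simpa [mul_assoc] using this
      exact h3 ▸ k.2
    refine ⟨g₀, h₀⁻¹, ?_, ?_⟩
    · ext x
      simp only [Subgroup.mem_map, MulEquiv.coe_toMonoidHom, MulAut.conj_apply]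
      constructor
      · intro hx
        exact ⟨g₀⁻¹ * x * g₀, bwd ⟨x, hx⟩, by group⟩
      · rintro ⟨y, hy, rfl⟩
        obtain ⟨k', hk', _⟩ := fwd ⟨y, hy⟩
        rw [← hk']
        exact k'.2
    · intro k k' hcoe
      obtain ⟨k'', hk''c, hk''φ⟩ := fwd k
      have : k' = k'' := Subtype.ext (by rw [hcoe, hk''c])
      rw [this, hk''φ, inv_inv]
  · rintro ⟨g, h, hK, hφ⟩
    have mem1 : ∀ k : K, g * (k : G) * g⁻¹ ∈ K' := by
      intro k
      rw [hK]
      exact ⟨(k : G), k.2, rfl⟩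
    have mem2 : ∀ x ∈ K', g⁻¹ * x * g ∈ K := by
      intro x hx
      rw [hK] at hx
      obtain ⟨y, hy, hyx⟩ := hx
      simp only [MulEquiv.coe_toMonoidHom, MulAut.conj_apply] at hyx
      have hyy : g⁻¹ * x * g = y := by rw [← hyx]; group
      exact hyy ▸ hy
    have hφ2 : ∀ k' : K',
        (φ ⟨g⁻¹ * (k' : G) * g, mem2 (k' : G) k'.2⟩ : H) = h⁻¹ * (φ' k' : H) * h := by
      intro k'
      have := hφ ⟨g⁻¹ * (k' : G) * g, mem2 (k' : G) k'.2⟩ k' (by group)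
      rw [this]; group
    let f : CosetBiset K φ → CosetBiset K' φ' :=
      Quot.map (fun a => (a.1 * h⁻¹, g * a.2)) (by
        rintro a b ⟨k, h1, h2⟩
        refine ⟨⟨g * (k : G) * g⁻¹, mem1 k⟩, ?_, ?_⟩
        · show b.1 * h⁻¹ = a.1 * h⁻¹ * (φ' ⟨g * (k : G) * g⁻¹, mem1 k⟩ : H)
          rw [h1, hφ k ⟨g * (k : G) * g⁻¹, mem1 k⟩ rfl]; group
        · show g * b.2 = (g * (k : G) * g⁻¹)⁻¹ * (g * a.2)
          rw [h2]; group)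
    let f' : CosetBiset K' φ' → CosetBiset K φ :=
      Quot.map (fun a => (a.1 * h, g⁻¹ * a.2)) (by
        rintro a b ⟨k', h1, h2⟩
        refine ⟨⟨g⁻¹ * (k' : G) * g, mem2 (k' : G) k'.2⟩, ?_, ?_⟩
        · show b.1 * h = a.1 * h * (φ ⟨g⁻¹ * (k' : G) * g, mem2 (k' : G) k'.2⟩ : H)
          rw [h1, hφ2 k']; group
        · show g⁻¹ * b.2 = (g⁻¹ * (k' : G) * g)⁻¹ * (g⁻¹ * a.2)
          rw [h2]; group)
    refine ⟨⟨f, f', ?_, ?_⟩, ?_, ?_⟩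
    · apply Quot.ind; intro a
      show Quot.mk _ (a.1 * h⁻¹ * h, g⁻¹ * (g * a.2)) = Quot.mk _ a
      simp
    · apply Quot.ind; intro a
      show Quot.mk _ (a.1 * h * h⁻¹, g * (g⁻¹ * a.2)) = Quot.mk _ a
      simp
    · intro h₀
      apply Quot.ind; intro a
      show Quot.mk _ (h₀ * a.1 * h⁻¹, g * a.2) = Quot.mk _ (h₀ * (a.1 * h⁻¹), g * a.2)
      rw [mul_assoc]
    · intro g₀
      apply Quot.ind; intro a
      show Quot.mk _ (a.1 * h⁻¹, g * (a.2 * g₀)) = Quot.mk _ (a.1 * h⁻¹, g * a.2 * g₀)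
      rw [mul_assoc]
end

section
/- Let G be a finite group and let X, Y be finite left-free (G,G)-bisets. If Φ_{⟨K,φ⟩}(X) = Φ_{⟨K,φ⟩}(Y) for every subgroup K ≤ G and every homomorphism φ : K → G, then X and Y are isomorphic as (G,G)-bisets. -/
open MulAction

/-- Split a subtype count along a set and its complement. -/
private lemma card_subtype_split {X : Type*} [Finite X] (s : Set X) (p : X → Prop) :
    Nat.card {x : X // p x} =
      Nat.card {a : s // p a.1} + Nat.card {a : (sᶜ : Set X) // p a.1} := by
  classical
  rw [← Nat.card_sum]
  apply Nat.card_congr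
  calc {x : X // p x}
      ≃ {z : (s : Type _) ⊕ (sᶜ : Set X) // p ((Equiv.Set.sumCompl s) z)} :=
        (Equiv.Set.sumCompl s).symm.subtypeEquiv (fun x => by
          rw [Equiv.apply_symm_apply])
    _ ≃ {a : s // p ((Equiv.Set.sumCompl s) (Sum.inl a))} ⊕
          {b : (sᶜ : Set X) // p ((Equiv.Set.sumCompl s) (Sum.inr b))} := Equiv.subtypeSum
    _ ≃ {a : s // p a.1} ⊕ {a : (sᶜ : Set X) // p a.1} := by
          apply Equiv.sumCongr <;> apply Equiv.subtypeEquivRight <;> intro a <;> simp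

private lemma key_transfer {H : Type*} [Group H] {Z W : Type*} [MulAction H Z] [MulAction H W]
    (z₀ : Z) (w₀ : W) (hzw : ∀ g : H, g • z₀ = z₀ ↔ g • w₀ = w₀)
    (g g' : H) (hg : g • z₀ = g' • z₀) : g • w₀ = g' • w₀ := by
  have h1 : (g'⁻¹ * g) • z₀ = z₀ := by rw [mul_smul, hg, inv_smul_smul]
  have h2 := (hzw _).mp h1
  rw [mul_smul] at h2
  calc g • w₀ = g' • (g'⁻¹ • (g • w₀)) := by rw [smul_inv_smul]
  _ = g' • w₀ := by rw [h2]

private lemma empty_case {H : Type*} [Group H] (X Y : Type*) [Finite X] [Finite Y]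
    [MulAction H X] [MulAction H Y] (hX : IsEmpty X)
    (h : ∀ L : Subgroup H, Nat.card {x : X // ∀ g ∈ L, g • x = x} =
        Nat.card {y : Y // ∀ g ∈ L, g • y = y}) :
    ∃ e : X ≃ Y, ∀ (g : H) (x : X), e (g • x) = g • e x := by
  have hY : Nat.card Y = 0 := by
    have h1 : Nat.card {y : Y // ∀ g ∈ (⊥ : Subgroup H), g • y = y} = Nat.card Y :=
      Nat.card_congr (Equiv.subtypeUnivEquiv (fun y g hg => by
        rw [Subgroup.mem_bot] at hg; rw [hg, one_smul]))
    have h2 : Nat.card {x : X // ∀ g ∈ (⊥ : Subgroup H), g • x = x} = 0 := by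
      simp [Nat.card_eq_zero]
    rw [← h1, ← h ⊥, h2]
  have : IsEmpty Y := by
    rcases Nat.card_eq_zero.mp hY with h' | h'
    · exact h'
    · exact absurd ‹Finite Y› h'.not_finite
  exact ⟨Equiv.equivOfIsEmpty X Y, fun g x => (hX.false x).elim⟩


/-- Equivariant equivalence between orbits of points with the same stabilizer. -/
private lemma orbit_equiv {H : Type*} [Group H] {X Y : Type*} [MulAction H X] [MulAction H Y]
    (x₀ : X) (y₀ : Y) (hst : ∀ g : H, g • x₀ = x₀ ↔ g • y₀ = y₀) :
    ∃ e : orbit H x₀ ≃ orbit H y₀,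
      ∀ (g : H) (a : orbit H x₀) (hm : g • a.1 ∈ orbit H x₀),
        (e ⟨g • a.1, hm⟩).1 = g • (e a).1 := by
  have hFex : ∀ a : orbit H x₀, ∃ g : H, g • x₀ = a.1 := fun a => mem_orbit_iff.mp a.2
  have hGex : ∀ b : orbit H y₀, ∃ g : H, g • y₀ = b.1 := fun b => mem_orbit_iff.mp b.2
  let F : orbit H x₀ → orbit H y₀ := fun a =>
    ⟨(Classical.choose (hFex a)) • y₀, mem_orbit _ _⟩
  let Gm : orbit H y₀ → orbit H x₀ := fun b =>
    ⟨(Classical.choose (hGex b)) • x₀, mem_orbit _ _⟩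
  have hF : ∀ (a : orbit H x₀) (g : H), g • x₀ = a.1 → (F a).1 = g • y₀ := by
    intro a g hg
    exact key_transfer x₀ y₀ hst _ g ((Classical.choose_spec (hFex a)).trans hg.symm)
  have hG : ∀ (b : orbit H y₀) (g : H), g • y₀ = b.1 → (Gm b).1 = g • x₀ := by
    intro b g hg
    exact key_transfer y₀ x₀ (fun g => (hst g).symm) _ g
      ((Classical.choose_spec (hGex b)).trans hg.symm)
  refine ⟨⟨F, Gm, ?_, ?_⟩, ?_⟩
  · intro a
    obtain ⟨g, hg⟩ := hFex a
    have h1 : (F a).1 = g • y₀ := hF a g hg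
    have h2 : (Gm (F a)).1 = g • x₀ := hG (F a) g h1.symm
    exact Subtype.ext (h2.trans hg)
  · intro b
    obtain ⟨g, hg⟩ := hGex b
    have h1 : (Gm b).1 = g • x₀ := hG b g hg
    have h2 : (F (Gm b)).1 = g • y₀ := hF (Gm b) g h1.symm
    exact Subtype.ext (h2.trans hg)
  · intro g a hm
    obtain ⟨g', hg'⟩ := hFex a
    have h1 : (g * g') • x₀ = g • a.1 := by rw [mul_smul, hg']
    have h2 := hF ⟨g • a.1, hm⟩ (g * g') h1
    have h3 := hF a g' hg'
    show (F ⟨g • a.1, hm⟩).1 = g • (F a).1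
    rw [h2, h3, mul_smul]

/-- Restrict an action to an invariant set. -/
private def subAction {H X : Type*} [Group H] [MulAction H X] (s : Set X)
    (hs : ∀ (g : H) (x : X), x ∈ s → g • x ∈ s) : MulAction H s where
  smul g a := ⟨g • a.1, hs g a.1 a.2⟩
  one_smul a := Subtype.ext (one_smul H a.1)
  mul_smul g g' a := Subtype.ext (mul_smul g g' a.1)


private theorem burnside {H : Type*} [Group H] [Finite H] :
    ∀ n : ℕ, ∀ (X Y : Type*), ∀ (_ : Finite X) (_ : Finite Y)
      (_ : MulAction H X) (_ : MulAction H Y),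
    Nat.card X ≤ n →
    (∀ L : Subgroup H, Nat.card {x : X // ∀ g ∈ L, g • x = x} =
        Nat.card {y : Y // ∀ g ∈ L, g • y = y}) →
    ∃ e : X ≃ Y, ∀ (g : H) (x : X), e (g • x) = g • e x := by
  intro n
  induction n with
  | zero =>
    intro X Y fX fY mX mY hc h
    have : Nat.card X = 0 := Nat.le_zero.mp hc
    have hX : IsEmpty X := by
      rcases Nat.card_eq_zero.mp this with h' | h'
      · exact h'
      · exact absurd fX h'.not_finite
    exact empty_case X Y hX h
  | succ n ih =>
    intro X Y fX fY mX mY hc h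
    classical
    rcases isEmpty_or_nonempty X with hX | hX
    · exact empty_case X Y hX h
    · -- pick maximal subgroup with nonempty fixed sets
      set S : Set (Subgroup H) := {L | Nat.card {x : X // ∀ g ∈ L, g • x = x} ≠ 0} with hS
      have hbotS : (⊥ : Subgroup H) ∈ S := by
        apply Nat.card_ne_zero.mpr
        refine ⟨⟨⟨Classical.arbitrary X, fun g hg => ?_⟩⟩, inferInstance⟩
        rw [Subgroup.mem_bot] at hg; rw [hg, one_smul]
      obtain ⟨M, hMS, hMmax⟩ :=
        Set.Finite.exists_maximalFor id S (Set.toFinite S) ⟨⊥, hbotS⟩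
      obtain ⟨⟨x₀, hx₀⟩⟩ := (Nat.card_ne_zero.mp hMS).1
      have hstabX : stabilizer H x₀ = M := by
        have h1 : M ≤ stabilizer H x₀ := fun g hg => mem_stabilizer_iff.mpr (hx₀ g hg)
        have h2 : stabilizer H x₀ ∈ S :=
          Nat.card_ne_zero.mpr ⟨⟨⟨x₀, fun g hg => mem_stabilizer_iff.mp hg⟩⟩, inferInstance⟩
        exact le_antisymm (hMmax h2 h1) h1
      obtain ⟨⟨y₀, hy₀⟩⟩ := (Nat.card_ne_zero.mp (by rw [← h M]; exact hMS)).1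
      have hstabY : stabilizer H y₀ = M := by
        have h1 : M ≤ stabilizer H y₀ := fun g hg => mem_stabilizer_iff.mpr (hy₀ g hg)
        have h2 : stabilizer H y₀ ∈ S := by
          apply Nat.card_ne_zero.mpr
          refine ⟨?_, inferInstance⟩
          have : Nat.card {y : Y // ∀ g ∈ stabilizer H y₀, g • y = y} ≠ 0 :=
            Nat.card_ne_zero.mpr
              ⟨⟨⟨y₀, fun g hg => mem_stabilizer_iff.mp hg⟩⟩, inferInstance⟩
          rw [← h _] at this
          exact (Nat.card_ne_zero.mp this).1
        exact le_antisymm (hMmax h2 h1) h1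
      have hst : ∀ g : H, g • x₀ = x₀ ↔ g • y₀ = y₀ := by
        intro g
        rw [← mem_stabilizer_iff, ← mem_stabilizer_iff, hstabX, hstabY]
      obtain ⟨e₀, he₀⟩ := orbit_equiv x₀ y₀ hst
      -- invariance of orbits
      have hinvX : ∀ (g : H) (x : X), x ∈ orbit H x₀ → g • x ∈ orbit H x₀ := by
        intro g x hx
        obtain ⟨g', hg'⟩ := mem_orbit_iff.mp hx
        exact mem_orbit_iff.mpr ⟨g * g', by rw [mul_smul, hg']⟩
      have hinvY : ∀ (g : H) (y : Y), y ∈ orbit H y₀ → g • y ∈ orbit H y₀ := by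
        intro g y hy
        obtain ⟨g', hg'⟩ := mem_orbit_iff.mp hy
        exact mem_orbit_iff.mpr ⟨g * g', by rw [mul_smul, hg']⟩
      have hinvXc : ∀ (g : H) (x : X), x ∈ (orbit H x₀)ᶜ → g • x ∈ (orbit H x₀)ᶜ := by
        intro g x hx hmem
        exact hx (by simpa using hinvX g⁻¹ _ hmem)
      have hinvYc : ∀ (g : H) (y : Y), y ∈ (orbit H y₀)ᶜ → g • y ∈ (orbit H y₀)ᶜ := by
        intro g y hy hmem
        exact hy (by simpa using hinvY g⁻¹ _ hmem)
      letI mP : MulAction H ((orbit H x₀)ᶜ : Set X) := subAction _ hinvXc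
      letI mQ : MulAction H ((orbit H y₀)ᶜ : Set Y) := subAction _ hinvYc
      -- fixed-point counts on orbits agree
      have horb : ∀ L : Subgroup H,
          Nat.card {a : orbit H x₀ // ∀ g ∈ L, g • a.1 = a.1} =
          Nat.card {b : orbit H y₀ // ∀ g ∈ L, g • b.1 = b.1} := by
        intro L
        apply Nat.card_congr
        apply Equiv.subtypeEquiv e₀
        intro a
        constructor
        · intro ha g hg
          have hm : g • a.1 ∈ orbit H x₀ := hinvX g a.1 a.2
          have : (⟨g • a.1, hm⟩ : orbit H x₀) = a := Subtype.ext (ha g hg)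
          have h2 := he₀ g a hm
          rw [this] at h2
          exact h2.symm
        · intro ha g hg
          have hm : g • a.1 ∈ orbit H x₀ := hinvX g a.1 a.2
          have h2 := he₀ g a hm
          rw [ha g hg] at h2
          have : (⟨g • a.1, hm⟩ : orbit H x₀) = a := e₀.injective (Subtype.ext h2)
          exact congrArg Subtype.val this
      -- fixed-point counts on complements agree
      have hcompl : ∀ L : Subgroup H,
          Nat.card {a : ((orbit H x₀)ᶜ : Set X) // ∀ g ∈ L, g • a = a} =
          Nat.card {b : ((orbit H y₀)ᶜ : Set Y) // ∀ g ∈ L, g • b = b} := by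
        intro L
        have hx := card_subtype_split (orbit H x₀) (fun x => ∀ g ∈ L, g • x = x)
        have hy := card_subtype_split (orbit H y₀) (fun y => ∀ g ∈ L, g • y = y)
        have e1 : {a : ((orbit H x₀)ᶜ : Set X) // ∀ g ∈ L, g • a = a} ≃
            {a : ((orbit H x₀)ᶜ : Set X) // ∀ g ∈ L, g • a.1 = a.1} :=
          Equiv.subtypeEquivRight (fun a => by
            constructor <;> intro hh g hg <;>
              [exact congrArg Subtype.val (hh g hg); exact Subtype.ext (hh g hg)])
        have e2 : {b : ((orbit H y₀)ᶜ : Set Y) // ∀ g ∈ L, g • b = b} ≃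
            {b : ((orbit H y₀)ᶜ : Set Y) // ∀ g ∈ L, g • b.1 = b.1} :=
          Equiv.subtypeEquivRight (fun b => by
            constructor <;> intro hh g hg <;>
              [exact congrArg Subtype.val (hh g hg); exact Subtype.ext (hh g hg)])
        rw [Nat.card_congr e1, Nat.card_congr e2]
        have := h L
        rw [hx, hy, horb L] at this
        omega
      -- cardinality bound
      have hcardP : Nat.card ((orbit H x₀)ᶜ : Set X) ≤ n := by
        have hsplit := card_subtype_split (orbit H x₀) (fun _ : X => True)
        have h1 : Nat.card {x : X // True} = Nat.card X :=
          Nat.card_congr (Equiv.subtypeUnivEquiv (fun _ => trivial))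
        have h2 : Nat.card {a : orbit H x₀ // True} = Nat.card (orbit H x₀) :=
          Nat.card_congr (Equiv.subtypeUnivEquiv (fun _ => trivial))
        have h3 : Nat.card {a : ((orbit H x₀)ᶜ : Set X) // True} =
            Nat.card ((orbit H x₀)ᶜ : Set X) :=
          Nat.card_congr (Equiv.subtypeUnivEquiv (fun _ => trivial))
        rw [h1, h2, h3] at hsplit
        have : 0 < Nat.card (orbit H x₀) := by
          have : Nonempty (orbit H x₀) := ⟨⟨x₀, mem_orbit_self x₀⟩⟩
          exact Nat.card_pos
        omega
      obtain ⟨e₁, he₁⟩ := ih _ _ inferInstance inferInstance mP mQ hcardP hcompl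
      -- assemble
      refine ⟨((Equiv.Set.sumCompl (orbit H x₀)).symm.trans
        ((e₀.sumCongr e₁).trans (Equiv.Set.sumCompl (orbit H y₀)))), ?_⟩
      intro g x
      by_cases hx : x ∈ orbit H x₀
      · have hgx : g • x ∈ orbit H x₀ := hinvX g x hx
        simp only [Equiv.trans_apply, Equiv.Set.sumCompl_symm_apply_of_mem hx,
          Equiv.Set.sumCompl_symm_apply_of_mem hgx, Equiv.sumCongr_apply, Sum.map_inl,
          Equiv.Set.sumCompl_apply_inl]
        exact he₀ g ⟨x, hx⟩ hgx
      · have hgx : g • x ∉ orbit H x₀ := hinvXc g x hx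
        simp only [Equiv.trans_apply, Equiv.Set.sumCompl_symm_apply_of_notMem hx,
          Equiv.Set.sumCompl_symm_apply_of_notMem hgx, Equiv.sumCongr_apply, Sum.map_inr,
          Equiv.Set.sumCompl_apply_inr]
        have h2 := he₁ g ⟨x, hx⟩
        have h3 : (⟨g • x, hgx⟩ : ((orbit H x₀)ᶜ : Set X)) = g • (⟨x, hx⟩ : _) :=
          Subtype.ext rfl
        rw [h3, h2]
        rfl

/-- Two finite left-free `(G,G)`-bisets with the same fixed-point counts
`Φ_⟨K,φ⟩` for all subgroups `K ≤ G` and homomorphisms `φ : K → G` are isomorphic. -/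
theorem stmt_8 {G : Type*} [Group G] [Finite G]
    (X Y : Type*) [Finite X] [Finite Y]
    (lX : G → X → X) (rX : G → X → X) (lY : G → Y → Y) (rY : G → Y → Y)
    (lX_one : ∀ x, lX 1 x = x) (lX_mul : ∀ a b x, lX (a * b) x = lX a (lX b x))
    (rX_one : ∀ x, rX 1 x = x) (rX_mul : ∀ a b x, rX (a * b) x = rX b (rX a x))
    (lrX : ∀ a b x, lX a (rX b x) = rX b (lX a x))
    (freeX : ∀ a x, lX a x = x → a = 1)
    (lY_one : ∀ y, lY 1 y = y) (lY_mul : ∀ a b y, lY (a * b) y = lY a (lY b y))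
    (rY_one : ∀ y, rY 1 y = y) (rY_mul : ∀ a b y, rY (a * b) y = rY b (rY a y))
    (lrY : ∀ a b y, lY a (rY b y) = rY b (lY a y))
    (freeY : ∀ a y, lY a y = y → a = 1)
    (hfix : ∀ (K : Subgroup G) (φ : K →* G),
      Nat.card {x : X // ∀ k : K, rX (k : G) x = lX (φ k) x} =
      Nat.card {y : Y // ∀ k : K, rY (k : G) y = lY (φ k) y}) :
    ∃ e : X ≃ Y, (∀ a x, e (lX a x) = lY a (e x)) ∧ (∀ a x, e (rX a x) = rY a (e x)) := by
  classical
  letI sXi : SMul (G × G) X := ⟨fun p x => lX p.1 (rX p.2⁻¹ x)⟩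
  letI mXi : MulAction (G × G) X :=
    { one_smul := fun x => by
        show lX 1 (rX 1⁻¹ x) = x
        rw [inv_one, rX_one, lX_one]
      mul_smul := fun p q x => by
        show lX (p.1 * q.1) (rX (p.2 * q.2)⁻¹ x) =
          lX p.1 (rX p.2⁻¹ (lX q.1 (rX q.2⁻¹ x)))
        rw [lX_mul, mul_inv_rev, rX_mul, ← lrX] }
  letI sYi : SMul (G × G) Y := ⟨fun p y => lY p.1 (rY p.2⁻¹ y)⟩
  letI mYi : MulAction (G × G) Y :=
    { one_smul := fun y => by
        show lY 1 (rY 1⁻¹ y) = y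
        rw [inv_one, rY_one, lY_one]
      mul_smul := fun p q y => by
        show lY (p.1 * q.1) (rY (p.2 * q.2)⁻¹ y) =
          lY p.1 (rY p.2⁻¹ (lY q.1 (rY q.2⁻¹ y)))
        rw [lY_mul, mul_inv_rev, rY_mul, ← lrY] }
  have fixX : ∀ (p : G × G) (x : X), p • x = x ↔ rX p.2 x = lX p.1 x := by
    intro p x
    have h1 : rX p.2 (rX p.2⁻¹ x) = x := by rw [← rX_mul, inv_mul_cancel, rX_one]
    have h2 : ∀ z, rX p.2⁻¹ (rX p.2 z) = z := fun z => by
      rw [← rX_mul, mul_inv_cancel, rX_one]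
    constructor
    · intro hp
      calc rX p.2 x = rX p.2 (lX p.1 (rX p.2⁻¹ x)) := (congrArg (rX p.2) hp).symm
        _ = lX p.1 (rX p.2 (rX p.2⁻¹ x)) := (lrX _ _ _).symm
        _ = lX p.1 x := by rw [h1]
    · intro hp
      show lX p.1 (rX p.2⁻¹ x) = x
      calc lX p.1 (rX p.2⁻¹ x) = rX p.2⁻¹ (lX p.1 x) := lrX _ _ _
        _ = rX p.2⁻¹ (rX p.2 x) := by rw [hp]
        _ = x := h2 x
  have fixY : ∀ (p : G × G) (y : Y), p • y = y ↔ rY p.2 y = lY p.1 y := by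
    intro p y
    have h1 : rY p.2 (rY p.2⁻¹ y) = y := by rw [← rY_mul, inv_mul_cancel, rY_one]
    have h2 : ∀ z, rY p.2⁻¹ (rY p.2 z) = z := fun z => by
      rw [← rY_mul, mul_inv_cancel, rY_one]
    constructor
    · intro hp
      calc rY p.2 y = rY p.2 (lY p.1 (rY p.2⁻¹ y)) := (congrArg (rY p.2) hp).symm
        _ = lY p.1 (rY p.2 (rY p.2⁻¹ y)) := (lrY _ _ _).symm
        _ = lY p.1 y := by rw [h1]
    · intro hp
      show lY p.1 (rY p.2⁻¹ y) = y
      calc lY p.1 (rY p.2⁻¹ y) = rY p.2⁻¹ (lY p.1 y) := lrY _ _ _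
        _ = rY p.2⁻¹ (rY p.2 y) := by rw [hp]
        _ = y := h2 y
  have hall : ∀ L : Subgroup (G × G),
      Nat.card {x : X // ∀ g ∈ L, g • x = x} = Nat.card {y : Y // ∀ g ∈ L, g • y = y} := by
    intro L
    by_cases hinj : ∀ a b c : G, (a, c) ∈ L → (b, c) ∈ L → a = b
    · -- L is the graph of a homomorphism
      set f : L →* G := (MonoidHom.snd G G).comp L.subtype with hfdef
      have hf : Function.Injective f := by
        intro u v huv
        have huv' : u.1.2 = v.1.2 := huv
        have hu : (u.1.1, u.1.2) ∈ L := by simpa using u.2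
        have hv : (v.1.1, u.1.2) ∈ L := by rw [huv']; simpa using v.2
        exact Subtype.ext (Prod.ext (hinj _ _ _ hu hv) huv')
      set eL := MonoidHom.ofInjective hf with heL
      set φ : f.range →* G :=
        ((MonoidHom.fst G G).comp L.subtype).comp eL.symm.toMonoidHom with hφdef
      have hval : ∀ k : f.range, ((k : G), ((eL.symm k : L) : G × G).2) = 1 → True := fun _ _ => trivial
      have hcoe : ∀ u : L, ((eL u : G) = u.1.2) := fun u => rfl
      have hφ : ∀ u : L, φ (eL u) = u.1.1 := by
        intro u
        show ((MonoidHom.fst G G).comp L.subtype) (eL.symm (eL u)) = u.1.1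
        rw [MulEquiv.symm_apply_apply]
        rfl
      have hsnd : ∀ k : f.range, (k : G) = ((eL.symm k : L) : G × G).2 := by
        intro k
        conv_lhs => rw [← eL.apply_symm_apply k]
        exact hcoe _
      have hφ2 : ∀ k : f.range, φ k = ((eL.symm k : L) : G × G).1 := fun k => rfl
      have hiffX : ∀ x : X,
          (∀ g ∈ L, g • x = x) ↔ (∀ k : f.range, rX (k : G) x = lX (φ k) x) := by
        intro x
        constructor
        · intro hx k
          rw [hsnd k, hφ2 k]
          exact (fixX _ x).mp (hx _ (eL.symm k).2)
        · intro hx p hp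
          rw [fixX]
          have := hx (eL ⟨p, hp⟩)
          rwa [hφ ⟨p, hp⟩, hcoe ⟨p, hp⟩] at this
      have hiffY : ∀ y : Y,
          (∀ g ∈ L, g • y = y) ↔ (∀ k : f.range, rY (k : G) y = lY (φ k) y) := by
        intro y
        constructor
        · intro hy k
          rw [hsnd k, hφ2 k]
          exact (fixY _ y).mp (hy _ (eL.symm k).2)
        · intro hy p hp
          rw [fixY]
          have := hy (eL ⟨p, hp⟩)
          rwa [hφ ⟨p, hp⟩, hcoe ⟨p, hp⟩] at this
      rw [Nat.card_congr (Equiv.subtypeEquivRight hiffX),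
        Nat.card_congr (Equiv.subtypeEquivRight hiffY)]
      exact hfix f.range φ
    · -- both fixed sets are empty
      push_neg at hinj
      obtain ⟨a, b, c, hac, hbc, hab⟩ := hinj
      have hXe : IsEmpty {x : X // ∀ g ∈ L, g • x = x} := by
        refine ⟨fun z => ?_⟩
        obtain ⟨x, hx⟩ := z
        have h1 := (fixX (a, c) x).mp (hx (a, c) hac)
        have h2 := (fixX (b, c) x).mp (hx (b, c) hbc)
        have h3 : lX (b⁻¹ * a) x = x := by
          rw [lX_mul, ← h1, h2, ← lX_mul, inv_mul_cancel, lX_one]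
        exact hab (inv_mul_eq_one.mp (freeX _ _ h3)).symm
      have hYe : IsEmpty {y : Y // ∀ g ∈ L, g • y = y} := by
        refine ⟨fun z => ?_⟩
        obtain ⟨y, hy⟩ := z
        have h1 := (fixY (a, c) y).mp (hy (a, c) hac)
        have h2 := (fixY (b, c) y).mp (hy (b, c) hbc)
        have h3 : lY (b⁻¹ * a) y = y := by
          rw [lY_mul, ← h1, h2, ← lY_mul, inv_mul_cancel, lY_one]
        exact hab (inv_mul_eq_one.mp (freeY _ _ h3)).symm
      rw [Nat.card_of_isEmpty, Nat.card_of_isEmpty]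
  obtain ⟨e, he⟩ := burnside (H := G × G) (Nat.card X) X Y inferInstance inferInstance
    mXi mYi le_rfl hall
  refine ⟨e, fun a x => ?_, fun b x => ?_⟩
  · have h1 : lX a x = (a, (1 : G)) • x := by
      show lX a x = lX a (rX (1 : G)⁻¹ x)
      rw [inv_one, rX_one]
    have h2 : lY a (e x) = (a, (1 : G)) • (e x) := by
      show lY a (e x) = lY a (rY (1 : G)⁻¹ (e x))
      rw [inv_one, rY_one]
    rw [h1, h2, he]
  · have h1 : rX b x = ((1 : G), b⁻¹) • x := by
      show rX b x = lX 1 (rX b⁻¹⁻¹ x)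
      rw [inv_inv, lX_one]
    have h2 : rY b (e x) = ((1 : G), b⁻¹) • (e x) := by
      show rY b (e x) = lY 1 (rY b⁻¹⁻¹ (e x))
      rw [inv_inv, lY_one]
    rw [h1, h2, he]
end
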